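/- arXiv:1304.2001 — 3 statements merged into one kernel-verified Lean document; each statement's English description precedes it below -/
import Mathlib

section
/- Assume conditions (A1), (A2) and (A3). Then for every λ ≥ 0, lim_{t→∞} (G(λ + c(t)) − G(c(t))) = G(λ). (Probabilistically: conditionally on A = t, the distribution of the population size Z^A just before the MRCA converges to the distribution of the stationary population size Z₀ as t → ∞.) -/
open MeasureTheory Real Set Filter

/-- The (sub)-critical branching mechanism
`ψ(z) = b z + σ z² + ∫₀^∞ (e^{−z u} − 1 + z u) m(du)`. -/
noncomputable def psi (b σ : ℝ) (m : Measure ℝ) (z : ℝ) : ℝ :=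
  b * z + σ * z ^ 2 + ∫ u in Ioi (0 : ℝ), (Real.exp (-(z * u)) - 1 + z * u) ∂m

/-- Condition (A3): either `σ > 0` or `∫₀^1 u m(du) = ∞`. -/
def condA3 (σ : ℝ) (m : Measure ℝ) : Prop :=
  0 < σ ∨ ∫⁻ u in Ioc (0 : ℝ) 1, ENNReal.ofReal u ∂m = ⊤

/-- `v t λ ∈ (0, λ]` is the unique solution of `∫_{v_t(λ)}^{λ} dz/ψ(z) = t`
(the cumulant semigroup). -/
def IsCumulant (b σ : ℝ) (m : Measure ℝ) (v : ℝ → ℝ → ℝ) : Prop :=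
  ∀ lam > (0 : ℝ), ∀ t ≥ (0 : ℝ),
    v t lam ∈ Ioc 0 lam ∧ ∫ z in (v t lam)..lam, (psi b σ m z)⁻¹ = t

/-- The immigration mechanism `F(z) = β z + ∫₀^∞ (1 − e^{−z u}) n(du)`. -/
noncomputable def Fim (β : ℝ) (n : Measure ℝ) (z : ℝ) : ℝ :=
  β * z + ∫ u in Ioi (0 : ℝ), (1 - Real.exp (-(z * u))) ∂n

/-- Condition (A2): `∫₀^λ F(z)/ψ(z) dz < ∞` for some `λ > 0`. -/
def condA2 (b σ β : ℝ) (m n : Measure ℝ) : Prop :=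
  ∃ lam > (0 : ℝ), IntegrableOn (fun z => Fim β n z / psi b σ m z) (Ioo 0 lam)

/-- Under (A1) and (A3), `c(t) ∈ (0,∞)` is defined by `∫_{c(t)}^∞ dz/ψ(z) = t`. -/
def IsExtinctionRate (b σ : ℝ) (m : Measure ℝ) (c : ℝ → ℝ) : Prop :=
  ∀ t > (0 : ℝ), 0 < c t ∧ ∫ z in Ioi (c t), (psi b σ m z)⁻¹ = t

namespace CLC

variable {b σ β : ℝ} {m n : Measure ℝ}

lemma exp_term_nonneg {x : ℝ} : 0 ≤ Real.exp (-x) - 1 + x := by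
  have := Real.add_one_le_exp (-x); linarith

lemma exp_term_pos {x : ℝ} (hx : x ≠ 0) : 0 < Real.exp (-x) - 1 + x := by
  have := Real.add_one_lt_exp (neg_ne_zero.2 hx); linarith

lemma exp_term_le {x : ℝ} (hx : 0 ≤ x) : Real.exp (-x) - 1 + x ≤ x * min 1 x := by
  have hE : Real.exp (-x) = (Real.exp x)⁻¹ := Real.exp_neg x
  have h1 : 1 + x ≤ Real.exp x := by have := Real.add_one_le_exp x; linarith
  have hxp : (0:ℝ) < Real.exp x := Real.exp_pos x
  have key : Real.exp (-x) * (1 + x) ≤ 1 := by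
    rw [hE]
    rw [inv_mul_le_iff₀ hxp]
    nlinarith
  have h2 : Real.exp (-x) - 1 + x ≤ x * (1 - Real.exp (-x)) := by nlinarith
  have h3 : 1 - Real.exp (-x) ≤ min 1 x := by
    have := Real.exp_nonneg (-x)
    have h4 : Real.exp (-x) ≥ 1 - x := by have := Real.add_one_le_exp (-x); linarith
    exact le_min (by linarith) (by linarith)
  calc Real.exp (-x) - 1 + x ≤ x * (1 - Real.exp (-x)) := h2
    _ ≤ x * min 1 x := by
        apply mul_le_mul_of_nonneg_left h3 hx

lemma psi_integrand_bound {z u : ℝ} (hz : 0 ≤ z) (hu : 0 < u) :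
    ‖Real.exp (-(z * u)) - 1 + z * u‖ ≤ (z + z ^ 2) * min u (u ^ 2) := by
  have hzu : 0 ≤ z * u := mul_nonneg hz hu.le
  rw [Real.norm_eq_abs, abs_of_nonneg exp_term_nonneg]
  have h := exp_term_le hzu
  rcases le_total u 1 with h1 | h1
  · have hmin : min u (u ^ 2) = u ^ 2 := min_eq_right (by nlinarith)
    have : z * u * min 1 (z * u) ≤ z * u * (z * u) := by
      apply mul_le_mul_of_nonneg_left (min_le_right _ _) hzu
    rw [hmin]; nlinarith
  · have hmin : min u (u ^ 2) = u := min_eq_left (by nlinarith)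
    have : z * u * min 1 (z * u) ≤ z * u * 1 := by
      apply mul_le_mul_of_nonneg_left (min_le_left _ _) hzu
    rw [hmin]; nlinarith

lemma psi_integrand_integrable (hm : IntegrableOn (fun u => min u (u ^ 2)) (Ioi 0) m)
    {z : ℝ} (hz : 0 ≤ z) :
    IntegrableOn (fun u => Real.exp (-(z * u)) - 1 + z * u) (Ioi 0) m := by
  apply Integrable.mono' (hm.const_mul (z + z ^ 2))
  · exact (Continuous.aestronglyMeasurable (by continuity))
  · filter_upwards [ae_restrict_mem measurableSet_Ioi] with u hu
    exact psi_integrand_bound hz hu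

lemma psi_nonneg (hb : 0 ≤ b) (hσ : 0 ≤ σ) {z : ℝ} (hz : 0 ≤ z) : 0 ≤ psi b σ m z := by
  have h1 : 0 ≤ ∫ u in Ioi (0:ℝ), (Real.exp (-(z * u)) - 1 + z * u) ∂m :=
    setIntegral_nonneg measurableSet_Ioi fun u _ => exp_term_nonneg
  have : 0 ≤ b * z := mul_nonneg hb hz
  have : 0 ≤ σ * z ^ 2 := mul_nonneg hσ (sq_nonneg z)
  unfold psi; linarith

lemma psi_pos (hb : 0 ≤ b) (hσ : 0 ≤ σ)
    (hm : IntegrableOn (fun u => min u (u ^ 2)) (Ioi 0) m) (hA3 : condA3 σ m)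
    {z : ℝ} (hz : 0 < z) : 0 < psi b σ m z := by
  have h1 : 0 ≤ ∫ u in Ioi (0:ℝ), (Real.exp (-(z * u)) - 1 + z * u) ∂m :=
    setIntegral_nonneg measurableSet_Ioi fun u _ => exp_term_nonneg
  have hbz : 0 ≤ b * z := mul_nonneg hb hz.le
  rcases hA3 with hσp | hminf
  · have : 0 < σ * z ^ 2 := mul_pos hσp (by positivity)
    unfold psi; linarith
  · -- m (Ioc 0 1) ≠ 0
    have hm01 : m (Ioc (0:ℝ) 1) ≠ 0 := by
      intro h0
      rw [setLIntegral_measure_zero _ _ h0] at hminf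
      exact ENNReal.zero_ne_top hminf
    have hsub : Ioc (0:ℝ) 1 ⊆ Ioi 0 := Ioc_subset_Ioi_self
    have hint : IntegrableOn (fun u => Real.exp (-(z * u)) - 1 + z * u) (Ioc 0 1) m :=
      (psi_integrand_integrable hm hz.le).mono_set hsub
    have hpos : 0 < ∫ u in Ioc (0:ℝ) 1, (Real.exp (-(z * u)) - 1 + z * u) ∂m := by
      rw [setIntegral_pos_iff_support_of_nonneg_ae ?_ hint]
      · apply lt_of_lt_of_le (lt_of_le_of_ne zero_le (Ne.symm hm01))
        apply measure_mono
        intro u hu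
        refine ⟨?_, hu⟩
        have hzu : z * u ≠ 0 := ne_of_gt (mul_pos hz hu.1)
        exact Function.mem_support.2 (ne_of_gt (exp_term_pos hzu))
      · filter_upwards with u using exp_term_nonneg
    have hmono : ∫ u in Ioc (0:ℝ) 1, (Real.exp (-(z * u)) - 1 + z * u) ∂m ≤
        ∫ u in Ioi (0:ℝ), (Real.exp (-(z * u)) - 1 + z * u) ∂m := by
      apply setIntegral_mono_set (psi_integrand_integrable hm hz.le)
      · filter_upwards with u using exp_term_nonneg
      · exact HasSubset.Subset.eventuallyLE hsub
    have : 0 ≤ σ * z ^ 2 := mul_nonneg hσ (sq_nonneg z)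
    unfold psi; linarith


lemma psi_continuousOn (hm : IntegrableOn (fun u => min u (u ^ 2)) (Ioi 0) m) :
    ContinuousOn (psi b σ m) (Ioi 0) := by
  intro z₀ hz₀
  apply ContinuousAt.continuousWithinAt
  unfold psi
  apply ContinuousAt.add
  · exact ((continuous_const.mul continuous_id).add
      (continuous_const.mul (continuous_pow 2))).continuousAt
  · apply continuousAt_of_dominated (bound := fun u => ((z₀+1) + (z₀+1)^2) * min u (u^2))
    · filter_upwards with x
      exact (Continuous.aestronglyMeasurable (by continuity))
    · have hnb : Ioo 0 (z₀+1) ∈ nhds z₀ := Ioo_mem_nhds hz₀ (by linarith)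
      filter_upwards [hnb] with x hx
      filter_upwards [ae_restrict_mem measurableSet_Ioi] with u hu
      calc ‖Real.exp (-(x * u)) - 1 + x * u‖ ≤ (x + x ^ 2) * min u (u ^ 2) :=
            psi_integrand_bound hx.1.le hu
        _ ≤ ((z₀+1) + (z₀+1)^2) * min u (u^2) := by
            have hmn : 0 ≤ min u (u^2) := le_min hu.le (sq_nonneg u)
            apply mul_le_mul_of_nonneg_right ?_ hmn
            nlinarith [hx.1.le, hx.2.le, sq_nonneg x, sq_nonneg (z₀+1)]
    · exact hm.const_mul _
    · filter_upwards with u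
      exact (Continuous.continuousAt (by continuity))

section Phi

variable (hb : 0 ≤ b) (hσ : 0 ≤ σ)
  (hm : IntegrableOn (fun u => min u (u ^ 2)) (Ioi 0) m) (hA3 : condA3 σ m)
  (hA1 : IntegrableOn (fun z => (psi b σ m z)⁻¹) (Ioi 1))

include hb hσ hm hA3

lemma psi_inv_continuousOn : ContinuousOn (fun z => (psi b σ m z)⁻¹) (Ioi 0) :=
  (psi_continuousOn hm).inv₀ fun z hz => (psi_pos hb hσ hm hA3 hz).ne'

lemma psi_inv_intervalIntegrable {a a' : ℝ} (ha : 0 < a) (ha' : 0 < a') :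
    IntervalIntegrable (fun z => (psi b σ m z)⁻¹) volume a a' := by
  apply ContinuousOn.intervalIntegrable
  apply (psi_inv_continuousOn hb hσ hm hA3).mono
  intro z hz
  have := hz.1
  rcases le_total a a' with h | h
  · rw [uIcc_of_le h] at hz; exact lt_of_lt_of_le ha hz.1
  · rw [uIcc_of_ge h] at hz; exact lt_of_lt_of_le ha' hz.1

include hA1 in
lemma psi_inv_integrableOn_Ioi {a : ℝ} (ha : 0 < a) :
    IntegrableOn (fun z => (psi b σ m z)⁻¹) (Ioi a) := by
  rcases le_or_gt a 1 with h | h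
  · rw [← Ioc_union_Ioi_eq_Ioi h]
    apply IntegrableOn.union ?_ hA1
    apply IntegrableOn.mono_set ?_ Ioc_subset_Icc_self
    apply ContinuousOn.integrableOn_Icc
    apply (psi_inv_continuousOn hb hσ hm hA3).mono
    intro z hz; exact lt_of_lt_of_le ha hz.1
  · exact hA1.mono_set (Ioi_subset_Ioi h.le)

end Phi

noncomputable def Phi (b σ : ℝ) (m : Measure ℝ) (x : ℝ) : ℝ :=
  ∫ z in (1:ℝ)..x, (psi b σ m z)⁻¹

section PhiLemmas

variable (hb : 0 ≤ b) (hσ : 0 ≤ σ)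
  (hm : IntegrableOn (fun u => min u (u ^ 2)) (Ioi 0) m) (hA3 : condA3 σ m)
  (hA1 : IntegrableOn (fun z => (psi b σ m z)⁻¹) (Ioi 1))

include hb hσ hm hA3

lemma Phi_sub {x y : ℝ} (hx : 0 < x) (hy : 0 < y) :
    Phi b σ m y - Phi b σ m x = ∫ z in x..y, (psi b σ m z)⁻¹ := by
  have h := intervalIntegral.integral_add_adjacent_intervals
    (psi_inv_intervalIntegrable hb hσ hm hA3 one_pos hx)
    (psi_inv_intervalIntegrable hb hσ hm hA3 hx hy)
  unfold Phi; linarith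

lemma Phi_strictMonoOn : StrictMonoOn (Phi b σ m) (Ioi 0) := by
  intro x hx y hy hxy
  have h : 0 < ∫ z in x..y, (psi b σ m z)⁻¹ := by
    apply intervalIntegral.intervalIntegral_pos_of_pos_on
      (psi_inv_intervalIntegrable hb hσ hm hA3 hx hy) ?_ hxy
    intro z hz
    exact inv_pos.2 (psi_pos hb hσ hm hA3 (lt_trans hx hz.1))
  have := Phi_sub hb hσ hm hA3 hx hy
  linarith

lemma Phi_hasDerivAt {x : ℝ} (hx : 0 < x) :
    HasDerivAt (Phi b σ m) (psi b σ m x)⁻¹ x := by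
  apply intervalIntegral.integral_hasDerivAt_right
    (psi_inv_intervalIntegrable hb hσ hm hA3 one_pos hx)
  · exact ⟨Ioi 0, Ioi_mem_nhds hx,
      (psi_inv_continuousOn hb hσ hm hA3).aestronglyMeasurable measurableSet_Ioi⟩
  · exact ((psi_inv_continuousOn hb hσ hm hA3) x hx).continuousAt (Ioi_mem_nhds hx)

include hA1 in
lemma integral_Ioi_eq {a : ℝ} (ha : 0 < a) :
    ∫ z in Ioi a, (psi b σ m z)⁻¹ =
      (∫ z in Ioi (1:ℝ), (psi b σ m z)⁻¹) - Phi b σ m a := by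
  have hioc : ∀ {p q : ℝ}, 0 < p → p ≤ q →
      IntegrableOn (fun z => (psi b σ m z)⁻¹) (Ioc p q) := by
    intro p q hp hpq
    apply IntegrableOn.mono_set ?_ Ioc_subset_Icc_self
    apply ContinuousOn.integrableOn_Icc
    apply (psi_inv_continuousOn hb hσ hm hA3).mono
    intro z hz; exact lt_of_lt_of_le hp hz.1
  rcases le_or_gt a 1 with h | h
  · rw [← Ioc_union_Ioi_eq_Ioi h,
      setIntegral_union (Ioc_disjoint_Ioi le_rfl) measurableSet_Ioi (hioc ha h) hA1]
    have h2 : ∫ z in Ioc a 1, (psi b σ m z)⁻¹ = ∫ z in a..(1:ℝ), (psi b σ m z)⁻¹ :=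
      (intervalIntegral.integral_of_le h).symm
    have h3 := Phi_sub hb hσ hm hA3 ha one_pos
    have h4 : Phi b σ m 1 = 0 := by unfold Phi; simp
    rw [h2]; rw [h4] at h3; linarith
  · have key : Ioc 1 a ∪ Ioi a = Ioi (1:ℝ) := Ioc_union_Ioi_eq_Ioi h.le
    have h5 : ∫ z in Ioi (1:ℝ), (psi b σ m z)⁻¹ =
        (∫ z in Ioc (1:ℝ) a, (psi b σ m z)⁻¹) + ∫ z in Ioi a, (psi b σ m z)⁻¹ := by
      rw [← key, setIntegral_union (Ioc_disjoint_Ioi le_rfl) measurableSet_Ioi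
        (hioc one_pos h.le) (hA1.mono_set (Ioi_subset_Ioi h.le))]
    have h2 : ∫ z in Ioc (1:ℝ) a, (psi b σ m z)⁻¹ = ∫ z in (1:ℝ)..a, (psi b σ m z)⁻¹ :=
      (intervalIntegral.integral_of_le h.le).symm
    have h3 := Phi_sub hb hσ hm hA3 one_pos (lt_trans one_pos h)
    have h4 : Phi b σ m 1 = 0 := by unfold Phi; simp
    rw [h2] at h5; rw [h4] at h3
    unfold Phi at *; linarith

end PhiLemmas

section VC

variable {v : ℝ → ℝ → ℝ} {c : ℝ → ℝ}
variable (hb : 0 ≤ b) (hσ : 0 ≤ σ)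
  (hm : IntegrableOn (fun u => min u (u ^ 2)) (Ioi 0) m) (hA3 : condA3 σ m)
  (hA1 : IntegrableOn (fun z => (psi b σ m z)⁻¹) (Ioi 1))
  (hv : IsCumulant b σ m v) (hc : IsExtinctionRate b σ m c)

include hb hσ hm hA3 hv

lemma Phi_v {lam t : ℝ} (hlam : 0 < lam) (ht : 0 ≤ t) :
    Phi b σ m (v t lam) = Phi b σ m lam - t := by
  obtain ⟨hmem, heq⟩ := hv lam hlam t ht
  have := Phi_sub hb hσ hm hA3 hmem.1 hlam
  linarith

lemma v_mono_lam {t a a' : ℝ} (ha : 0 < a) (haa' : a ≤ a') (ht : 0 ≤ t) :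
    v t a ≤ v t a' := by
  have ha' : 0 < a' := lt_of_lt_of_le ha haa'
  have h1 := Phi_v hb hσ hm hA3 hv ha ht
  have h2 := Phi_v hb hσ hm hA3 hv ha' ht
  have hPhi : Phi b σ m a ≤ Phi b σ m a' :=
    (Phi_strictMonoOn hb hσ hm hA3).monotoneOn ha ha' haa'
  have hva := (hv a ha t ht).1
  have hva' := (hv a' ha' t ht).1
  exact ((Phi_strictMonoOn hb hσ hm hA3).le_iff_le hva.1 hva'.1).1 (by linarith)

lemma v_unique {lam t z : ℝ} (hlam : 0 < lam) (ht : 0 ≤ t) (hz : z ∈ Ioc 0 lam)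
    (hPhi : Phi b σ m z = Phi b σ m lam - t) : z = v t lam := by
  have h1 := Phi_v hb hσ hm hA3 hv hlam ht
  have hv1 := (hv lam hlam t ht).1
  exact (Phi_strictMonoOn hb hσ hm hA3).injOn hz.1 hv1.1 (by linarith)

include hA1 hc

lemma Phi_c {t : ℝ} (ht : 0 < t) :
    Phi b σ m (c t) = (∫ z in Ioi (1:ℝ), (psi b σ m z)⁻¹) - t := by
  obtain ⟨hpos, heq⟩ := hc t ht
  have := integral_Ioi_eq hb hσ hm hA3 hA1 hpos
  linarith

lemma c_antitone {t t' : ℝ} (ht : 0 < t) (htt' : t ≤ t') : c t' ≤ c t := by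
  have ht' : 0 < t' := lt_of_lt_of_le ht htt'
  have h1 := Phi_c hb hσ hm hA3 hA1 hv hc ht
  have h2 := Phi_c hb hσ hm hA3 hA1 hv hc ht'
  exact ((Phi_strictMonoOn hb hσ hm hA3).le_iff_le (hc t' ht').1 (hc t ht).1).1 (by linarith)

lemma c_tendsto : Tendsto c atTop (nhds 0) := by
  rw [tendsto_order]
  constructor
  · intro a ha
    filter_upwards [eventually_gt_atTop (0:ℝ)] with t ht
    exact lt_trans ha (hc t ht).1
  · intro ε hε
    set K := ∫ z in Ioi (1:ℝ), (psi b σ m z)⁻¹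
    filter_upwards [eventually_gt_atTop (max 0 (K - Phi b σ m ε))] with t ht
    have ht0 : 0 < t := lt_of_le_of_lt (le_max_left _ _) ht
    by_contra hcon
    push_neg at hcon
    have hPhi : Phi b σ m ε ≤ Phi b σ m (c t) :=
      (Phi_strictMonoOn hb hσ hm hA3).monotoneOn hε (hc t ht0).1 hcon
    rw [Phi_c hb hσ hm hA3 hA1 hv hc ht0] at hPhi
    have := lt_of_le_of_lt (le_max_right 0 (K - Phi b σ m ε)) ht
    linarith

lemma v_c {t s : ℝ} (ht : 0 < t) (hs : 0 ≤ s) : v s (c t) = c (s + t) := by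
  have hst : 0 < s + t := by linarith
  have hct := (hc t ht).1
  have hcst := (hc (s+t) hst).1
  refine (v_unique hb hσ hm hA3 hv hct hs ⟨hcst, ?_⟩ ?_).symm
  · exact c_antitone hb hσ hm hA3 hA1 hv hc ht (by linarith)
  · rw [Phi_c hb hσ hm hA3 hA1 hv hc ht, Phi_c hb hσ hm hA3 hA1 hv hc hst]
    ring

end VC

section FimLemmas

variable (hβ : 0 ≤ β) (hn : IntegrableOn (fun u => min 1 u) (Ioi 0) n)

lemma F_integrand_bound {z u : ℝ} (hz : 0 ≤ z) (hu : 0 < u) :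
    ‖1 - Real.exp (-(z * u))‖ ≤ (1 + z) * min 1 u := by
  have hzu : 0 ≤ z * u := mul_nonneg hz hu.le
  have hE1 : Real.exp (-(z * u)) ≤ 1 := Real.exp_le_one_iff.2 (by linarith)
  have hE2 : 1 - z * u ≤ Real.exp (-(z * u)) := by
    have := Real.add_one_le_exp (-(z*u)); linarith
  rw [Real.norm_eq_abs, abs_of_nonneg (by linarith)]
  rcases le_total 1 u with h | h
  · rw [min_eq_left h]
    have := Real.exp_nonneg (-(z*u))
    nlinarith
  · rw [min_eq_right h]
    nlinarith

include hn in
lemma F_integrand_integrable {z : ℝ} (hz : 0 ≤ z) :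
    IntegrableOn (fun u => 1 - Real.exp (-(z * u))) (Ioi 0) n := by
  apply Integrable.mono' (hn.const_mul (1 + z))
  · exact (Continuous.aestronglyMeasurable (by continuity))
  · filter_upwards [ae_restrict_mem measurableSet_Ioi] with u hu
    exact F_integrand_bound hz hu

include hβ in
lemma F_nonneg {z : ℝ} (hz : 0 ≤ z) : 0 ≤ Fim β n z := by
  have h1 : 0 ≤ ∫ u in Ioi (0:ℝ), (1 - Real.exp (-(z * u))) ∂n := by
    apply setIntegral_nonneg measurableSet_Ioi
    intro u hu
    have : Real.exp (-(z * u)) ≤ 1 :=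
      Real.exp_le_one_iff.2 (by nlinarith [le_of_lt (show (0:ℝ) < u from hu)])
    linarith
  have : 0 ≤ β * z := mul_nonneg hβ hz
  unfold Fim; linarith

lemma F_zero : Fim β n 0 = 0 := by
  unfold Fim; simp

include hβ hn in
lemma F_monotoneOn : MonotoneOn (Fim β n) (Ici 0) := by
  intro z hz z' hz' hzz'
  unfold Fim
  have h1 : β * z ≤ β * z' := mul_le_mul_of_nonneg_left hzz' hβ
  have h2 : ∫ u in Ioi (0:ℝ), (1 - Real.exp (-(z * u))) ∂n ≤
      ∫ u in Ioi (0:ℝ), (1 - Real.exp (-(z' * u))) ∂n := by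
    apply setIntegral_mono_on (F_integrand_integrable hn hz)
      (F_integrand_integrable hn hz') measurableSet_Ioi
    intro u hu
    have : Real.exp (-(z' * u)) ≤ Real.exp (-(z * u)) := by
      apply Real.exp_le_exp.2
      have : (0:ℝ) < u := hu
      nlinarith
    linarith
  linarith

include hn in
lemma F_continuousWithinAt {z₀ : ℝ} (hz₀ : 0 ≤ z₀) :
    ContinuousWithinAt (Fim β n) (Ici 0) z₀ := by
  unfold Fim
  apply ContinuousWithinAt.add
  · exact (continuous_const.mul continuous_id).continuousWithinAt
  · apply continuousWithinAt_of_dominated (bound := fun u => (1 + (z₀+1)) * min 1 u)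
    · filter_upwards with x
      exact (Continuous.aestronglyMeasurable (by continuity))
    · have hnb : Ici 0 ∩ Iio (z₀+1) ∈ nhdsWithin z₀ (Ici 0) := by
        apply inter_mem self_mem_nhdsWithin
        exact mem_nhdsWithin_of_mem_nhds (Iio_mem_nhds (by linarith))
      filter_upwards [hnb] with x hx
      filter_upwards [ae_restrict_mem measurableSet_Ioi] with u hu
      calc ‖1 - Real.exp (-(x * u))‖ ≤ (1 + x) * min 1 u := F_integrand_bound hx.1 hu
        _ ≤ (1 + (z₀+1)) * min 1 u := by
            have hx2 : x < z₀ + 1 := hx.2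
            exact mul_le_mul_of_nonneg_right (by linarith) (le_min zero_le_one hu.le)
    · exact hn.const_mul _
    · filter_upwards with u
      exact Continuous.continuousWithinAt (by continuity)

end FimLemmas

section GInt

variable {v : ℝ → ℝ → ℝ}
variable (hb : 0 ≤ b) (hσ : 0 ≤ σ) (hβ : 0 ≤ β)
  (hm : IntegrableOn (fun u => min u (u ^ 2)) (Ioi 0) m)
  (hn : IntegrableOn (fun u => min 1 u) (Ioi 0) n)
  (hA3 : condA3 σ m) (hA2 : condA2 b σ β m n)
  (hv : IsCumulant b σ m v)

include hb hσ hm hA3 hv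

lemma vmax_antitone {μ : ℝ} (hμ : 0 < μ) : Antitone (fun s => v (max s 0) μ) := by
  intro s s' hss'
  have h1 := Phi_v hb hσ hm hA3 hv hμ (le_max_right s 0)
  have h2 := Phi_v hb hσ hm hA3 hv hμ (le_max_right s' 0)
  have hmax : max s 0 ≤ max s' 0 := max_le_max hss' le_rfl
  exact ((Phi_strictMonoOn hb hσ hm hA3).le_iff_le
    (hv μ hμ (max s' 0) (le_max_right _ _)).1.1
    (hv μ hμ (max s 0) (le_max_right _ _)).1.1).1 (by linarith)

include hβ hn in
lemma Fv_aestronglyMeasurable {μ : ℝ} (hμ : 0 < μ) :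
    AEStronglyMeasurable (fun s => Fim β n (v s μ)) (volume.restrict (Ioi 0)) := by
  have hanti : Antitone (fun s => Fim β n (v (max s 0) μ)) := by
    intro s s' hss'
    have h1 := (hv μ hμ (max s 0) (le_max_right _ _)).1
    have h2 := (hv μ hμ (max s' 0) (le_max_right _ _)).1
    exact F_monotoneOn hβ hn h2.1.le h1.1.le (vmax_antitone hb hσ hm hA3 hv hμ hss')
  apply (hanti.measurable.aestronglyMeasurable.restrict).congr
  filter_upwards [ae_restrict_mem measurableSet_Ioi] with s hs
  rw [max_eq_left (le_of_lt hs)]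

omit hb hσ hm hA3 hv in
include hβ hn hA2 in
lemma A2_ext (hbb : 0 ≤ b) (hσσ : 0 ≤ σ)
    (hmm : IntegrableOn (fun u => min u (u ^ 2)) (Ioi 0) m) (hA33 : condA3 σ m)
    {μ : ℝ} (hμ : 0 < μ) :
    IntegrableOn (fun z => Fim β n z / psi b σ m z) (Ioo 0 μ) := by
  obtain ⟨lam₀, hlam₀, hi⟩ := hA2
  rcases le_or_gt μ lam₀ with h | h
  · exact hi.mono_set (Ioo_subset_Ioo_right h)
  · apply IntegrableOn.mono_set (t := Ioo 0 lam₀ ∪ Icc lam₀ μ)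
    · apply hi.union
      apply IntegrableOn.mono_set ?_ (le_refl (Icc lam₀ μ))
      apply ContinuousOn.integrableOn_Icc
      apply ContinuousOn.div
      · intro z hz
        exact (F_continuousWithinAt hn (le_trans hlam₀.le hz.1)).mono
          (fun w hw => le_trans (le_of_lt hlam₀) hw.1 |>.trans le_rfl |> fun _ => hw.1.trans' hlam₀.le)
      · exact (psi_continuousOn hmm).mono (fun z hz => lt_of_lt_of_le hlam₀ hz.1)
      · exact fun z hz => (psi_pos hbb hσσ hmm hA33 (lt_of_lt_of_le hlam₀ hz.1)).ne'
    · intro z hz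
      rcases lt_or_ge z lam₀ with h2 | h2
      · exact Or.inl ⟨hz.1, h2⟩
      · exact Or.inr ⟨h2, hz.2.le⟩

lemma Phi_image {μ : ℝ} (hμ : 0 < μ) :
    Phi b σ m '' (Ioo 0 μ) = Iio (Phi b σ m μ) := by
  ext y
  constructor
  · rintro ⟨z, hz, rfl⟩
    exact (Phi_strictMonoOn hb hσ hm hA3) hz.1 hμ hz.2
  · intro hy
    have ht : 0 < Phi b σ m μ - y := by simpa using hy
    obtain ⟨hmem, _⟩ := hv μ hμ (Phi b σ m μ - y) ht.le
    have hPv := Phi_v hb hσ hm hA3 hv hμ ht.le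
    have hne : v (Phi b σ m μ - y) μ ≠ μ := by
      intro he
      rw [he] at hPv
      linarith
    exact ⟨v (Phi b σ m μ - y) μ, ⟨hmem.1, lt_of_le_of_ne hmem.2 hne⟩, by linarith⟩

include hβ hn hA2 in
lemma G_integrable {μ : ℝ} (hμ : 0 < μ) :
    IntegrableOn (fun s => Fim β n (v s μ)) (Ioi 0) volume := by
  set Y := Phi b σ m μ with hY
  set g : ℝ → ℝ := fun y => Fim β n (v (max (Y - y) 0) μ) with hg
  have hRHS : IntegrableOn (fun x => |(psi b σ m x)⁻¹| • g (Phi b σ m x)) (Ioo 0 μ) volume := by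
    apply IntegrableOn.congr_fun (A2_ext hβ hn hA2 hb hσ hm hA3 hμ) ?_ measurableSet_Ioo
    intro x hx
    have hPx : Phi b σ m x < Y := (Phi_strictMonoOn hb hσ hm hA3) hx.1 hμ hx.2
    have ht : 0 < Y - Phi b σ m x := by linarith
    have hxv : x = v (Y - Phi b σ m x) μ := by
      apply v_unique hb hσ hm hA3 hv hμ ht.le ⟨hx.1, hx.2.le⟩
      ring
    have hmax : max (Y - Phi b σ m x) 0 = Y - Phi b σ m x := max_eq_left ht.le
    have hpsi : 0 < psi b σ m x := psi_pos hb hσ hm hA3 hx.1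
    rw [hg]
    simp only [smul_eq_mul, hmax, ← hxv, abs_of_nonneg (inv_nonneg.2 hpsi.le)]
    rw [div_eq_mul_inv, mul_comm]
  have hderiv : ∀ x ∈ Ioo 0 μ, HasDerivWithinAt (Phi b σ m) ((psi b σ m x)⁻¹) (Ioo 0 μ) x :=
    fun x hx => (Phi_hasDerivAt hb hσ hm hA3 hx.1).hasDerivWithinAt
  have hinj : InjOn (Phi b σ m) (Ioo 0 μ) :=
    (Phi_strictMonoOn hb hσ hm hA3).injOn.mono (fun x hx => hx.1)
  have himg : IntegrableOn g (Iio Y) volume := by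
    rw [← Phi_image hb hσ hm hA3 hv hμ]
    rw [integrableOn_image_iff_integrableOn_abs_deriv_smul measurableSet_Ioo hderiv hinj g]
    exact hRHS
  have hemb : MeasurableEmbedding (fun s : ℝ => Y - s) :=
    (Homeomorph.subLeft Y).measurableEmbedding
  have hmp : MeasurePreserving (fun s : ℝ => Y - s) volume volume :=
    Measure.measurePreserving_sub_left volume Y
  have hpre : (fun s : ℝ => Y - s) ⁻¹' (Iio Y) = Ioi 0 := by
    ext s; simp
  have hmap : Measure.map (fun s : ℝ => Y - s) (volume.restrict (Ioi 0))
      = volume.restrict (Iio Y) := by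
    rw [← hpre, ← Measure.restrict_map hemb.measurable measurableSet_Iio, hmp.map_eq]
  have hcomp : Integrable (g ∘ fun s : ℝ => Y - s) (volume.restrict (Ioi 0)) := by
    have himg' : Integrable g (volume.restrict (Iio Y)) := himg
    rw [← hmap] at himg'
    exact (hemb.integrable_map_iff).1 himg'
  apply hcomp.congr
  filter_upwards [ae_restrict_mem measurableSet_Ioi] with s hs
  have h1 : Y - (Y - s) = s := by ring
  simp only [Function.comp, hg, h1, max_eq_left (le_of_lt (show (0:ℝ) < s from hs))]

end GInt

section Limits

variable {v : ℝ → ℝ → ℝ} {c : ℝ → ℝ}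
variable (hb : 0 ≤ b) (hσ : 0 ≤ σ)
  (hm : IntegrableOn (fun u => min u (u ^ 2)) (Ioi 0) m) (hA3 : condA3 σ m)
  (hA1 : IntegrableOn (fun z => (psi b σ m z)⁻¹) (Ioi 1))
  (hv : IsCumulant b σ m v) (hc : IsExtinctionRate b σ m c)

include hb hσ hm hA3 hA1 hv hc

lemma Phi_comp_tendsto {lam : ℝ} (hlam : 0 < lam) :
    Tendsto (fun t => Phi b σ m (lam + c t)) atTop (nhds (Phi b σ m lam)) := by
  have h1 : Tendsto (fun t => lam + c t) atTop (nhds lam) := by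
    have := tendsto_const_nhds (x := lam) (f := atTop (α := ℝ)) |>.add
      (c_tendsto hb hσ hm hA3 hA1 hv hc)
    simpa using this
  exact ((Phi_hasDerivAt hb hσ hm hA3 hlam).continuousAt.tendsto).comp h1

lemma v_tendsto {lam s : ℝ} (hlam : 0 < lam) (hs : 0 < s) :
    Tendsto (fun t => v s (lam + c t)) atTop (nhds (v s lam)) := by
  have hw := (hv lam hlam s hs.le).1
  rw [tendsto_order]
  constructor
  · intro a ha
    filter_upwards [eventually_gt_atTop (0:ℝ)] with t ht
    have hct := (hc t ht).1
    have h2 : v s lam ≤ v s (lam + c t) :=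
      v_mono_lam hb hσ hm hA3 hv hlam (by linarith) hs.le
    linarith
  · intro a ha
    have haw : 0 < a := lt_trans hw.1 ha
    have hδ : Phi b σ m (v s lam) < Phi b σ m a :=
      (Phi_strictMonoOn hb hσ hm hA3) hw.1 haw ha
    set δ := Phi b σ m a - Phi b σ m (v s lam) with hδdef
    have hev : ∀ᶠ t in atTop, Phi b σ m (lam + c t) < Phi b σ m lam + δ :=
      (Phi_comp_tendsto hb hσ hm hA3 hA1 hv hc hlam).eventually
        (gt_mem_nhds (by linarith [hδ, (Phi_v hb hσ hm hA3 hv hlam hs.le)]))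
    filter_upwards [hev, eventually_gt_atTop (0:ℝ)] with t h1 ht
    have hct := (hc t ht).1
    have hlamct : 0 < lam + c t := by linarith
    have hvt := (hv (lam + c t) hlamct s hs.le).1
    have h2 : Phi b σ m (v s (lam + c t)) = Phi b σ m (lam + c t) - s :=
      Phi_v hb hσ hm hA3 hv hlamct hs.le
    have h3 : Phi b σ m (v s lam) = Phi b σ m lam - s :=
      Phi_v hb hσ hm hA3 hv hlam hs.le
    have h4 : Phi b σ m (v s (lam + c t)) < Phi b σ m a := by
      rw [h2]; rw [h3] at hδdef; simp only [hδdef] at h1 ⊢; linarith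
    exact ((Phi_strictMonoOn hb hσ hm hA3).lt_iff_lt hvt.1 haw).1 h4

end Limits
end CLC

theorem conditional_law_converges (b σ β : ℝ) (m n : Measure ℝ)
    (hb : 0 ≤ b) (hσ : 0 ≤ σ) (hβ : 0 ≤ β)
    (hm : IntegrableOn (fun u => min u (u ^ 2)) (Ioi 0) m)
    (hn : IntegrableOn (fun u => min 1 u) (Ioi 0) n)
    (hA1 : IntegrableOn (fun z => (psi b σ m z)⁻¹) (Ioi 1))
    (hA2 : condA2 b σ β m n) (hA3 : condA3 σ m)
    (v : ℝ → ℝ → ℝ) (hv : IsCumulant b σ m v)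
    (hv0 : ∀ t ≥ (0 : ℝ), v t 0 = 0)
    (c : ℝ → ℝ) (hc : IsExtinctionRate b σ m c) :
    ∀ lam ≥ (0 : ℝ),
      Tendsto
        (fun t => (∫ s in Ioi (0 : ℝ), Fim β n (v s (lam + c t))) -
          ∫ s in Ioi (0 : ℝ), Fim β n (v s (c t)))
        atTop (nhds (∫ s in Ioi (0 : ℝ), Fim β n (v s lam))) := by
  intro lam hlam
  rcases eq_or_lt_of_le hlam with heq | hlam
  · -- lam = 0
    subst heq
    have h1 : (fun t => (∫ s in Ioi (0:ℝ), Fim β n (v s (0 + c t))) -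
        ∫ s in Ioi (0:ℝ), Fim β n (v s (c t))) = fun _ => (0:ℝ) := by
      funext t; simp only [zero_add, sub_self]
    have h2 : ∫ s in Ioi (0:ℝ), Fim β n (v s 0) = 0 := by
      rw [setIntegral_congr_fun measurableSet_Ioi (g := fun _ => (0:ℝ))
        (fun s hs => by rw [hv0 s (le_of_lt hs)]; exact CLC.F_zero)]
      exact integral_zero _ _
    rw [h1, h2]
    exact tendsto_const_nhds
  · -- lam > 0
    have hc1 : 0 < c 1 := (hc 1 one_pos).1
    have hμ1 : 0 < lam + c 1 := by linarith
    -- c t ≤ c 1 for t ≥ 1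
    have hcle : ∀ t : ℝ, 1 ≤ t → c t ≤ c 1 := fun t ht =>
      CLC.c_antitone hb hσ hm hA3 hA1 hv hc one_pos ht
    have T1 : Tendsto (fun t => ∫ s in Ioi (0:ℝ), Fim β n (v s (lam + c t))) atTop
        (nhds (∫ s in Ioi (0:ℝ), Fim β n (v s lam))) := by
      apply tendsto_integral_filter_of_dominated_convergence
        (bound := fun s => Fim β n (v s (lam + c 1)))
      · filter_upwards [eventually_gt_atTop (0:ℝ)] with t ht
        exact CLC.Fv_aestronglyMeasurable hb hσ hβ hm hn hA3 hv
          (by linarith [(hc t ht).1])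
      · filter_upwards [eventually_ge_atTop (1:ℝ)] with t ht
        filter_upwards [ae_restrict_mem measurableSet_Ioi] with s hs
        have ht0 : (0:ℝ) < t := lt_of_lt_of_le one_pos ht
        have hct := (hc t ht0).1
        have hμt : 0 < lam + c t := by linarith
        have hv1 := (hv (lam + c t) hμt s (le_of_lt hs)).1
        have hv2 := (hv (lam + c 1) hμ1 s (le_of_lt hs)).1
        rw [Real.norm_eq_abs, abs_of_nonneg (CLC.F_nonneg hβ hv1.1.le)]
        exact CLC.F_monotoneOn hβ hn hv1.1.le hv2.1.le
          (CLC.v_mono_lam hb hσ hm hA3 hv hμt (by linarith [hcle t ht]) (le_of_lt hs))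
      · exact CLC.G_integrable hb hσ hβ hm hn hA3 hA2 hv hμ1
      · filter_upwards [ae_restrict_mem measurableSet_Ioi] with s hs
        have hvs := (hv lam hlam s (le_of_lt hs)).1
        have hFc : ContinuousAt (Fim β n) (v s lam) :=
          (CLC.F_continuousWithinAt hn hvs.1.le).continuousAt (Ici_mem_nhds hvs.1)
        exact hFc.tendsto.comp (CLC.v_tendsto hb hσ hm hA3 hA1 hv hc hlam hs)
    have T2 : Tendsto (fun t => ∫ s in Ioi (0:ℝ), Fim β n (v s (c t))) atTop
        (nhds 0) := by
      have := tendsto_integral_filter_of_dominated_convergence (μ := volume.restrict (Ioi 0))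
        (F := fun (t : ℝ) s => Fim β n (v s (c t))) (f := fun _ => (0:ℝ))
        (bound := fun s => Fim β n (v s (c 1))) (l := atTop)
        ?_ ?_ ?_ ?_
      · simpa using this
      · filter_upwards [eventually_gt_atTop (0:ℝ)] with t ht
        exact CLC.Fv_aestronglyMeasurable hb hσ hβ hm hn hA3 hv (hc t ht).1
      · filter_upwards [eventually_ge_atTop (1:ℝ)] with t ht
        filter_upwards [ae_restrict_mem measurableSet_Ioi] with s hs
        have ht0 : (0:ℝ) < t := lt_of_lt_of_le one_pos ht
        have hct := (hc t ht0).1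
        have hv1 := (hv (c t) hct s (le_of_lt hs)).1
        have hv2 := (hv (c 1) hc1 s (le_of_lt hs)).1
        rw [Real.norm_eq_abs, abs_of_nonneg (CLC.F_nonneg hβ hv1.1.le)]
        exact CLC.F_monotoneOn hβ hn hv1.1.le hv2.1.le
          (CLC.v_mono_lam hb hσ hm hA3 hv hct (hcle t ht) (le_of_lt hs))
      · exact CLC.G_integrable hb hσ hβ hm hn hA3 hA2 hv hc1
      · filter_upwards [ae_restrict_mem measurableSet_Ioi] with s hs
        have hev : ∀ᶠ t in (atTop : Filter ℝ), Fim β n (v s (c t)) = Fim β n (c (s + t)) := by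
          filter_upwards [eventually_gt_atTop (0:ℝ)] with t ht
          rw [CLC.v_c hb hσ hm hA3 hA1 hv hc ht (le_of_lt hs)]
        have hcst : Tendsto (fun t => c (s + t)) atTop (nhds 0) :=
          (CLC.c_tendsto hb hσ hm hA3 hA1 hv hc).comp
            (tendsto_atTop_add_const_left atTop s tendsto_id)
        have hs0 : (0:ℝ) < s := hs
        have hmem : ∀ᶠ t in (atTop : Filter ℝ), c (s + t) ∈ Ici (0:ℝ) := by
          filter_upwards [eventually_gt_atTop (0:ℝ)] with t ht
          exact (hc (s + t) (by linarith)).1.le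
        have hFt : Tendsto (fun t => Fim β n (c (s + t))) atTop
            (nhds (Fim β n 0)) :=
          ((CLC.F_continuousWithinAt hn le_rfl).tendsto).comp
            (tendsto_nhdsWithin_iff.2 ⟨hcst, hmem⟩)
        rw [CLC.F_zero] at hFt
        exact Tendsto.congr' (Filter.EventuallyEq.symm hev) hFt
    have := T1.sub T2
    simpa using this
end

section
/- Let F be an immigration mechanism with F(x) > 0 for x > 0, and fix x > 0. Then for every a ∈ [0,1], F(x) − F((1−a)x) = Σ_{n≥1} (−1)^{n+1} F^{(n)}(x) (a x)^n / n!, where every term of the series is nonnegative. Consequently, the numbers p_n := (−1)^{n+1} x^n F^{(n)}(x) / (n! F(x)), n ≥ 1, satisfy p_n ≥ 0 and Σ_{n≥1} p_n = 1, i.e. (p_n)_{n≥1} is a probability distribution on the positive integers. (With x = c(t), p_n = P(N^A = n | A = t) is the conditional distribution of the number of oldest families.) -/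
open MeasureTheory Real Set Filter

lemma bound_pow_exp (k : ℕ) (hk : 1 ≤ k) {c : ℝ} (hc : 0 < c) :
    ∃ C : ℝ, 0 ≤ C ∧ ∀ u ∈ Ioi (0:ℝ), u ^ k * Real.exp (-(c * u)) ≤ C * min 1 u := by
  set M : ℝ := max 1 (((k+1).factorial : ℝ) / c ^ (k+1)) with hM
  refine ⟨M, le_trans zero_le_one (le_max_left _ _), ?_⟩
  intro u hu
  have hu0 : (0:ℝ) < u := hu
  rcases le_or_gt u 1 with h1 | h1
  · have hmin : min 1 u = u := min_eq_right h1
    rw [hmin]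
    have h2 : u ^ k ≤ u ^ 1 := pow_le_pow_of_le_one hu0.le h1 hk
    have h3 : Real.exp (-(c*u)) ≤ 1 := Real.exp_le_one_iff.mpr (by nlinarith)
    have h4 : u ^ k * Real.exp (-(c*u)) ≤ u ^ k * 1 :=
      mul_le_mul_of_nonneg_left h3 (by positivity)
    have h5 : (1:ℝ) ≤ M := le_max_left _ _
    nlinarith [pow_nonneg hu0.le k]
  · have hmin : min 1 u = 1 := min_eq_left h1.le
    rw [hmin, mul_one]
    have hfac : (0:ℝ) < ((k+1).factorial : ℝ) := by positivity
    have hkey : (c*u) ^ (k+1) / ((k+1).factorial : ℝ) ≤ Real.exp (c*u) :=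
      Real.pow_div_factorial_le_exp (c*u) (by positivity) (k+1)
    have hkey' : c ^ (k+1) * u ^ (k+1) ≤ ((k+1).factorial : ℝ) * Real.exp (c*u) := by
      rw [div_le_iff₀ hfac] at hkey
      calc c ^ (k+1) * u ^ (k+1) = (c*u) ^ (k+1) := (mul_pow c u (k+1)).symm
        _ ≤ Real.exp (c*u) * ((k+1).factorial : ℝ) := hkey
        _ = ((k+1).factorial : ℝ) * Real.exp (c*u) := by ring
    have hE : (0:ℝ) < Real.exp (-(c*u)) := Real.exp_pos _
    have h4 : c ^ (k+1) * u ^ (k+1) * Real.exp (-(c*u)) ≤ ((k+1).factorial : ℝ) := by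
      have h := mul_le_mul_of_nonneg_right hkey' hE.le
      rw [mul_assoc (((k+1).factorial : ℝ)), ← Real.exp_add] at h
      simpa using h
    have h5 : ((k+1).factorial : ℝ) / c ^ (k+1) ≤ M := le_max_right _ _
    have hcp : (0:ℝ) < c ^ (k+1) := by positivity
    have h6 : ((k+1).factorial : ℝ) ≤ M * c ^ (k+1) := by
      rw [div_le_iff₀ hcp] at h5; linarith
    have h7 : u ^ (k+1) = u ^ k * u := pow_succ u k
    rw [h7] at h4
    have h10 : u ^ k * Real.exp (-(c*u)) * c ^ (k+1) ≤ M * c ^ (k+1) := by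
      nlinarith [mul_nonneg (mul_nonneg (mul_pos (pow_pos hu0 k) hE).le
        (sub_nonneg.mpr h1.le)) hcp.le]
    exact le_of_mul_le_mul_right h10 hcp

noncomputable def Hint (n : MeasureTheory.Measure ℝ) (k : ℕ) (z : ℝ) : ℝ :=
  ∫ u in Ioi (0:ℝ), u ^ k * Real.exp (-(z * u)) ∂n

variable {n : MeasureTheory.Measure ℝ}

lemma integrableOn_of_min_bound {f : ℝ → ℝ}
    (hn : IntegrableOn (fun u => min 1 u) (Ioi 0) n)
    (hf : AEStronglyMeasurable f (n.restrict (Ioi 0))) {C : ℝ}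
    (hb : ∀ u ∈ Ioi (0:ℝ), |f u| ≤ C * min 1 u) :
    IntegrableOn f (Ioi 0) n := by
  refine Integrable.mono (hn.const_mul C) hf ?_
  filter_upwards [ae_restrict_mem measurableSet_Ioi] with u hu
  have h1 := hb u hu
  have h2 : (0:ℝ) ≤ min 1 u := le_min zero_le_one (le_of_lt hu)
  have h3 : C * min 1 u ≤ |C * min 1 u| := le_abs_self _
  simpa [Real.norm_eq_abs, abs_mul] using le_trans h1 (le_trans h3 (le_of_eq (abs_mul _ _)))

lemma hint_integrable (hn : IntegrableOn (fun u => min 1 u) (Ioi 0) n)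
    {k : ℕ} (hk : 1 ≤ k) {z : ℝ} (hz : 0 < z) :
    IntegrableOn (fun u => u ^ k * Real.exp (-(z * u))) (Ioi 0) n := by
  obtain ⟨C, hC0, hC⟩ := bound_pow_exp k hk hz
  refine integrableOn_of_min_bound hn ?_ (C := C) ?_
  · exact (Continuous.aestronglyMeasurable (by fun_prop)).restrict
  · intro u hu
    have hu0 : (0:ℝ) < u := hu
    have := hC u hu
    have hpos : 0 ≤ u ^ k * Real.exp (-(z*u)) := by positivity
    rwa [abs_of_nonneg hpos]

lemma hint_nonneg (k : ℕ) (z : ℝ) : 0 ≤ Hint n k z := by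
  refine setIntegral_nonneg measurableSet_Ioi fun u hu => ?_
  have : (0:ℝ) < u := hu
  positivity

lemma one_sub_exp_integrable (hn : IntegrableOn (fun u => min 1 u) (Ioi 0) n)
    {z : ℝ} (hz : 0 ≤ z) :
    IntegrableOn (fun u => 1 - Real.exp (-(z * u))) (Ioi 0) n := by
  refine integrableOn_of_min_bound hn
    ((Continuous.aestronglyMeasurable (by continuity)).restrict) (C := max 1 z) ?_
  intro u hu
  have hu0 : (0:ℝ) < u := hu
  have hzu : 0 ≤ z * u := mul_nonneg hz hu0.le
  have h1 : Real.exp (-(z*u)) ≤ 1 := Real.exp_le_one_iff.mpr (by linarith)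
  have h2 : 1 - z*u ≤ Real.exp (-(z*u)) := by
    have := Real.add_one_le_exp (-(z*u)); linarith
  have habs : |1 - Real.exp (-(z*u))| = 1 - Real.exp (-(z*u)) :=
    abs_of_nonneg (by linarith)
  rw [habs]
  rcases le_or_gt u 1 with h | h
  · have : min 1 u = u := min_eq_right h
    rw [this]
    have : z * u ≤ max 1 z * u := mul_le_mul_of_nonneg_right (le_max_right _ _) hu0.le
    linarith
  · have hm : min 1 u = 1 := min_eq_left h.le
    rw [hm, mul_one]
    have : (1:ℝ) ≤ max 1 z := le_max_left _ _
    linarith [Real.exp_pos (-(z*u))]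

lemma hasDerivAt_G0 (hn : IntegrableOn (fun u => min 1 u) (Ioi 0) n)
    {z : ℝ} (hz : 0 < z) :
    HasDerivAt (fun w => ∫ u in Ioi (0:ℝ), (1 - Real.exp (-(w * u))) ∂n)
      (Hint n 1 z) z := by
  obtain ⟨C, hC0, hC⟩ := bound_pow_exp 1 le_rfl (half_pos hz)
  have hball : ∀ w ∈ Metric.ball z (z/2), z/2 < w := by
    intro w hw
    rw [Real.ball_eq_Ioo] at hw
    linarith [hw.1]
  have key := hasDerivAt_integral_of_dominated_loc_of_deriv_le
    (μ := n.restrict (Ioi 0)) (x₀ := z)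
    (F := fun w u => 1 - Real.exp (-(w * u)))
    (F' := fun w u => u * Real.exp (-(w * u)))
    (bound := fun u => C * min 1 u)
    (Metric.ball_mem_nhds z (half_pos hz))
    (Eventually.of_forall fun w =>
      (Continuous.aestronglyMeasurable (by fun_prop)).restrict)
    (one_sub_exp_integrable hn hz.le)
    ((Continuous.aestronglyMeasurable (by fun_prop)).restrict)
    ?_ (hn.const_mul C) ?_
  · simpa [Hint] using key.2
  · filter_upwards [ae_restrict_mem measurableSet_Ioi] with u hu
    intro w hw
    have hu0 : (0:ℝ) < u := hu
    have hw' : z/2 < w := hball w hw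
    have h1 : Real.exp (-(w*u)) ≤ Real.exp (-(z/2*u)) := by
      apply Real.exp_le_exp.mpr; nlinarith
    have h2 : u * Real.exp (-(w*u)) ≤ u * Real.exp (-(z/2*u)) :=
      mul_le_mul_of_nonneg_left h1 hu0.le
    have h3 := hC u hu
    rw [pow_one] at h3
    have hpos : 0 ≤ u * Real.exp (-(w*u)) := by positivity
    rw [Real.norm_eq_abs, abs_of_nonneg hpos]
    linarith
  · filter_upwards with u
    intro w hw
    have hd : HasDerivAt (fun w : ℝ => -(w * u)) (-u) w := by
      simpa [Pi.neg_def] using ((hasDerivAt_id w).mul_const u).neg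
    have := (hd.exp).const_sub 1
    convert this using 1
    ring

lemma hasDerivAt_Hint (hn : IntegrableOn (fun u => min 1 u) (Ioi 0) n)
    {k : ℕ} (hk : 1 ≤ k) {z : ℝ} (hz : 0 < z) :
    HasDerivAt (Hint n k) (-(Hint n (k+1) z)) z := by
  obtain ⟨C, hC0, hC⟩ := bound_pow_exp (k+1) (Nat.le_succ_of_le hk) (half_pos hz)
  have hball : ∀ w ∈ Metric.ball z (z/2), z/2 < w := by
    intro w hw
    rw [Real.ball_eq_Ioo] at hw
    linarith [hw.1]
  have key := hasDerivAt_integral_of_dominated_loc_of_deriv_le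
    (μ := n.restrict (Ioi 0)) (x₀ := z)
    (F := fun w u => u ^ k * Real.exp (-(w * u)))
    (F' := fun w u => -(u ^ (k+1) * Real.exp (-(w * u))))
    (bound := fun u => C * min 1 u)
    (Metric.ball_mem_nhds z (half_pos hz))
    (Eventually.of_forall fun w =>
      (Continuous.aestronglyMeasurable (by fun_prop)).restrict)
    (hint_integrable hn hk hz)
    ((Continuous.aestronglyMeasurable (by fun_prop)).restrict)
    ?_ (hn.const_mul C) ?_
  · have h2 := key.2
    rw [show ∫ u in Ioi (0:ℝ), -(u ^ (k+1) * Real.exp (-(z * u))) ∂n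
        = -(Hint n (k+1) z) from by rw [integral_neg]; rfl] at h2
    exact h2
  · filter_upwards [ae_restrict_mem measurableSet_Ioi] with u hu
    intro w hw
    have hu0 : (0:ℝ) < u := hu
    have hw' : z/2 < w := hball w hw
    have h1 : Real.exp (-(w*u)) ≤ Real.exp (-(z/2*u)) := by
      apply Real.exp_le_exp.mpr; nlinarith
    have h2 : u ^ (k+1) * Real.exp (-(w*u)) ≤ u ^ (k+1) * Real.exp (-(z/2*u)) :=
      mul_le_mul_of_nonneg_left h1 (by positivity)
    have h3 := hC u hu
    have hpos : 0 ≤ u ^ (k+1) * Real.exp (-(w*u)) := by positivity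
    rw [Real.norm_eq_abs, abs_neg, abs_of_nonneg hpos]
    linarith
  · filter_upwards with u
    intro w hw
    have hd : HasDerivAt (fun w : ℝ => -(w * u)) (-u) w := by
      simpa [Pi.neg_def] using ((hasDerivAt_id w).mul_const u).neg
    have := (hd.exp).const_mul (u ^ k)
    refine this.congr_deriv ?_
    rw [pow_succ]
    ring

lemma iteratedDeriv_Fim (β : ℝ) (hn : IntegrableOn (fun u => min 1 u) (Ioi 0) n) :
    ∀ k : ℕ, 1 ≤ k → ∀ z ∈ Ioi (0:ℝ),
      iteratedDeriv k (Fim β n) z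
        = (if k = 1 then β else 0) + (-1:ℝ)^(k+1) * Hint n k z := by
  intro k hk
  induction k, hk using Nat.le_induction with
  | base =>
    intro z hz
    have hz' : (0:ℝ) < z := hz
    rw [iteratedDeriv_one]
    have h := ((hasDerivAt_id z).const_mul β).add (hasDerivAt_G0 hn hz')
    have h2 : HasDerivAt (Fim β n) (β + Hint n 1 z) z := by
      exact h.congr_deriv (by simp)
    rw [h2.deriv]
    norm_num
  | succ k hk IH =>
    intro z hz
    have hz' : (0:ℝ) < z := hz
    rw [iteratedDeriv_succ]
    have hev : iteratedDeriv k (Fim β n)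
        =ᶠ[nhds z] (fun w => (if k = 1 then β else 0) + (-1:ℝ)^(k+1) * Hint n k w) := by
      filter_upwards [isOpen_Ioi.mem_nhds hz] with w hw using IH w hw
    rw [hev.deriv_eq]
    have hd : HasDerivAt
        (fun w => (if k = 1 then β else 0) + (-1:ℝ)^(k+1) * Hint n k w)
        ((-1:ℝ)^(k+1) * (-(Hint n (k+1) z))) z :=
      ((hasDerivAt_Hint hn hk hz').const_mul _).const_add _
    rw [hd.deriv, if_neg (by omega : ¬ k + 1 = 1)]
    rw [pow_succ]
    ring

lemma core_hasSum (hn : IntegrableOn (fun u => min 1 u) (Ioi 0) n)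
    {x a : ℝ} (hx : 0 < x) (ha0 : 0 ≤ a) (ha1 : a ≤ 1) :
    HasSum (fun k : ℕ => Hint n (k+1) x * ((a*x)^(k+1) / (((k+1).factorial : ℕ) : ℝ)))
      (∫ u in Ioi (0:ℝ),
        (Real.exp (-((1-a)*x*u)) - Real.exp (-(x*u))) ∂n) := by
  set f : ℕ → ℝ → ℝ :=
    fun k u => u ^ (k+1) * Real.exp (-(x*u)) * ((a*x)^(k+1) / (((k+1).factorial : ℕ) : ℝ))
    with hf
  set g : ℝ → ℝ := fun u => Real.exp (-((1-a)*x*u)) - Real.exp (-(x*u)) with hg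
  -- pointwise sum
  have hptw : ∀ u : ℝ, HasSum (fun k => f k u) (g u) := by
    intro u
    have h0 : HasSum (fun m : ℕ => (a*x*u)^m / ((m.factorial : ℕ) : ℝ))
        (Real.exp (a*x*u)) := by
      have := NormedSpace.expSeries_div_hasSum_exp (a*x*u)
      rwa [← Real.exp_eq_exp_ℝ] at this
    have h1 : HasSum (fun k : ℕ => (a*x*u)^(k+1) / (((k+1).factorial : ℕ) : ℝ))
        (Real.exp (a*x*u) - 1) := by
      have h2 := (hasSum_nat_add_iff' (f := fun m : ℕ => (a*x*u)^m / ((m.factorial : ℕ) : ℝ)) 1).mpr h0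
      simpa using h2
    have h2 := h1.mul_left (Real.exp (-(x*u)))
    have hterm : ∀ k : ℕ,
        Real.exp (-(x*u)) * ((a*x*u)^(k+1) / (((k+1).factorial : ℕ) : ℝ)) = f k u := by
      intro k
      rw [hf]
      rw [show a*x*u = (a*x)*u from rfl, mul_pow]
      ring
    have hval : Real.exp (-(x*u)) * (Real.exp (a*x*u) - 1) = g u := by
      rw [mul_sub, ← Real.exp_add, show -(x*u) + a*x*u = -((1-a)*x*u) by ring, hg]
      ring
    rw [← hval]
    exact h2.congr_fun fun k => (hterm k).symm
  -- integrability of each term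
  have fint : ∀ k : ℕ, IntegrableOn (f k) (Ioi 0) n := by
    intro k
    exact (hint_integrable hn (Nat.le_add_left 1 k) hx).mul_const _
  -- integrability of g
  have gint : IntegrableOn g (Ioi 0) n := by
    have e1 := one_sub_exp_integrable hn hx.le
    have e2 := one_sub_exp_integrable hn
      (mul_nonneg (by linarith : (0:ℝ) ≤ 1 - a) hx.le)
    have : g = fun u => (1 - Real.exp (-(x*u))) - (1 - Real.exp (-((1-a)*x*u))) := by
      funext u; rw [hg]; ring
    rw [this]
    exact e1.sub e2
  -- the sequence of integrals
  have hSeq : ∀ k : ℕ, ∫ u in Ioi (0:ℝ), f k u ∂n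
      = Hint n (k+1) x * ((a*x)^(k+1) / (((k+1).factorial : ℕ) : ℝ)) := by
    intro k
    rw [hf]
    exact integral_mul_const _ _
  have hSnonneg : ∀ k : ℕ, 0 ≤ ∫ u in Ioi (0:ℝ), f k u ∂n := by
    intro k
    refine setIntegral_nonneg measurableSet_Ioi fun u hu => ?_
    have hu0 : (0:ℝ) < u := hu
    rw [hf]
    positivity
  have hfnonneg : ∀ u ∈ Ioi (0:ℝ), ∀ k : ℕ, 0 ≤ f k u := by
    intro u hu k
    have hu0 : (0:ℝ) < u := hu
    rw [hf]
    positivity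
  -- partial sums bounded
  have hbound : ∀ N : ℕ, ∑ k ∈ Finset.range N, ∫ u in Ioi (0:ℝ), f k u ∂n
      ≤ ∫ u in Ioi (0:ℝ), g u ∂n := by
    intro N
    rw [← integral_finset_sum _ (fun k _ => fint k)]
    refine setIntegral_mono_on (integrable_finset_sum _ (fun k _ => fint k)) gint
      measurableSet_Ioi fun u hu => ?_
    exact sum_le_hasSum (Finset.range N) (fun k _ => hfnonneg u hu k) (hptw u)
  have hS : Summable fun k : ℕ => ∫ u in Ioi (0:ℝ), f k u ∂n :=
    summable_of_sum_range_le hSnonneg hbound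
  have hnormeq : ∀ k : ℕ, (∫ u in Ioi (0:ℝ), ‖f k u‖ ∂n)
      = ∫ u in Ioi (0:ℝ), f k u ∂n := by
    intro k
    refine integral_congr_ae ?_
    filter_upwards [ae_restrict_mem measurableSet_Ioi] with u hu
    exact Real.norm_of_nonneg (hfnonneg u hu k)
  have hsum := hasSum_integral_of_summable_integral_norm (μ := n.restrict (Ioi 0))
    (F := f) fint (by simpa only [hnormeq] using hS)
  have htsum : (∫ u in Ioi (0:ℝ), (∑' k, f k u) ∂n) = ∫ u in Ioi (0:ℝ), g u ∂n :=
    setIntegral_congr_fun measurableSet_Ioi fun u _ => (hptw u).tsum_eq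
  rw [htsum] at hsum
  exact hsum.congr_fun fun k => (hSeq k).symm


theorem oldest_families_distribution (β : ℝ) (n : Measure ℝ)
    (hβ : 0 ≤ β)
    (hn : IntegrableOn (fun u => min 1 u) (Ioi 0) n)
    (hFpos : ∀ z > (0 : ℝ), 0 < Fim β n z)
    (x : ℝ) (hx : 0 < x) :
    (∀ a ∈ Icc (0 : ℝ) 1,
      (∀ k : ℕ, 1 ≤ k →
        0 ≤ (-1 : ℝ) ^ (k + 1) * iteratedDeriv k (Fim β n) x * (a * x) ^ k /
          (k.factorial : ℝ)) ∧
      HasSum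
        (fun k : ℕ => (-1 : ℝ) ^ (k + 2) * iteratedDeriv (k + 1) (Fim β n) x *
          (a * x) ^ (k + 1) / ((k + 1).factorial : ℝ))
        (Fim β n x - Fim β n ((1 - a) * x))) ∧
    (∀ k : ℕ, 1 ≤ k →
      0 ≤ (-1 : ℝ) ^ (k + 1) * x ^ k * iteratedDeriv k (Fim β n) x /
        ((k.factorial : ℝ) * Fim β n x)) ∧
    HasSum
      (fun k : ℕ => (-1 : ℝ) ^ (k + 2) * x ^ (k + 1) *
        iteratedDeriv (k + 1) (Fim β n) x /
          (((k + 1).factorial : ℝ) * Fim β n x))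
      1 := by
  have hx' : x ∈ Ioi (0:ℝ) := hx
  have hD := iteratedDeriv_Fim β hn
  have hsq : ∀ m : ℕ, ((-1:ℝ)^m) * ((-1:ℝ)^m) = 1 := by
    intro m
    rw [← pow_add]
    exact Even.neg_one_pow ⟨m, rfl⟩
  have hsign : ∀ k : ℕ, 1 ≤ k → 0 ≤ (-1:ℝ)^(k+1) * iteratedDeriv k (Fim β n) x := by
    intro k hk
    rw [hD k hk x hx']
    rcases eq_or_ne k 1 with h | h
    · subst h
      norm_num
      linarith [hint_nonneg (n := n) 1 x]
    · rw [if_neg h, zero_add, ← mul_assoc, hsq (k+1), one_mul]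
      exact hint_nonneg _ _
  have hmain : ∀ a ∈ Icc (0 : ℝ) 1,
      (∀ k : ℕ, 1 ≤ k →
        0 ≤ (-1 : ℝ) ^ (k + 1) * iteratedDeriv k (Fim β n) x * (a * x) ^ k /
          (k.factorial : ℝ)) ∧
      HasSum
        (fun k : ℕ => (-1 : ℝ) ^ (k + 2) * iteratedDeriv (k + 1) (Fim β n) x *
          (a * x) ^ (k + 1) / ((k + 1).factorial : ℝ))
        (Fim β n x - Fim β n ((1 - a) * x)) := by
    rintro a ⟨ha0, ha1⟩
    constructor
    · intro k hk
      exact div_nonneg (mul_nonneg (hsign k hk)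
        (pow_nonneg (mul_nonneg ha0 hx.le) k)) (Nat.cast_nonneg _)
    · have hcore := core_hasSum hn hx ha0 ha1
      have hβsum : HasSum (fun k : ℕ => if k = 0 then β*(a*x) else 0) (β*(a*x)) :=
        hasSum_ite_eq 0 _
      have htot := hβsum.add hcore
      have e1 := one_sub_exp_integrable hn hx.le
      have e2 := one_sub_exp_integrable hn
        (mul_nonneg (by linarith : (0:ℝ) ≤ 1 - a) hx.le)
      have hval : Fim β n x - Fim β n ((1 - a) * x)
          = β*(a*x) + ∫ u in Ioi (0:ℝ),
              (Real.exp (-((1-a)*x*u)) - Real.exp (-(x*u))) ∂n := by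
        have h12 : (∫ u in Ioi (0:ℝ), (1 - Real.exp (-(x*u))) ∂n)
            - (∫ u in Ioi (0:ℝ), (1 - Real.exp (-((1-a)*x*u))) ∂n)
            = ∫ u in Ioi (0:ℝ),
                (Real.exp (-((1-a)*x*u)) - Real.exp (-(x*u))) ∂n := by
          rw [← integral_sub e1 e2]
          exact setIntegral_congr_fun measurableSet_Ioi fun u _ => by ring
        simp only [Fim]
        linear_combination h12
      rw [hval]
      refine htot.congr_fun fun k => ?_
      rw [hD (k+1) (Nat.le_add_left 1 k) x hx']
      rcases eq_or_ne k 0 with rfl | hk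
      · norm_num [Nat.factorial]
        ring
      · rw [if_neg (by omega : ¬ k + 1 = 1), if_neg hk, zero_add, zero_add]
        rw [show k + 1 + 1 = k + 2 from rfl, ← mul_assoc, hsq (k+2), one_mul,
          mul_div_assoc]
  refine ⟨hmain, ?_, ?_⟩
  · intro k hk
    have h1 := hsign k hk
    rw [show (-1:ℝ)^(k+1) * x^k * iteratedDeriv k (Fim β n) x
        = ((-1:ℝ)^(k+1) * iteratedDeriv k (Fim β n) x) * x^k from by ring]
    exact div_nonneg (mul_nonneg h1 (pow_nonneg hx.le k))
      (mul_nonneg (Nat.cast_nonneg _) (hFpos x hx).le)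
  · have hsum1 := (hmain 1 ⟨zero_le_one, le_rfl⟩).2
    rw [show (1-(1:ℝ))*x = 0 from by ring] at hsum1
    have hF0 : Fim β n 0 = 0 := by simp [Fim]
    rw [hF0, sub_zero] at hsum1
    have hdiv := hsum1.div_const (Fim β n x)
    rw [div_self (hFpos x hx).ne'] at hdiv
    refine hdiv.congr_fun fun k => ?_
    rw [one_mul]
    ring
end

section
/- Assume conditions (A1) and (A3), and let F be an immigration mechanism with F(x) > 0 for x > 0. Then the map t ↦ c(t)/F(c(t)) is non-increasing on (0,∞). (Consequently, if F′(0+) < ∞, the conditional expectation E[N^A | A = t] = F′(0+) c(t)/F(c(t)) of the number of oldest families is a non-increasing function of t.) -/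
open MeasureTheory Real Set Filter

lemma key_ineq' (a x : ℝ) (ha : 0 ≤ a) (hd : 0 ≤ x) :
    a * (1 - exp (-(a+x))) ≤ (a+x) * (1 - exp (-a)) := by
  have h1 : 0 < exp (-a) := exp_pos _
  have h2 : 0 < exp (-x) := exp_pos _
  have h3 : exp (-(a+x)) = exp (-a) * exp (-x) := by rw [← exp_add]; ring_nf
  have h4 : -x + 1 ≤ exp (-x) := add_one_le_exp _
  have h5 : exp (-a) * exp a = 1 := by rw [← exp_add]; simp
  have h6 : 1 + a ≤ exp a := by linarith [add_one_le_exp a]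
  nlinarith [mul_nonneg ha hd, mul_pos h1 h2, mul_nonneg (mul_nonneg ha hd) h1.le,
    mul_le_mul_of_nonneg_left h6 (mul_nonneg hd h1.le),
    mul_le_mul_of_nonneg_left h4 (mul_nonneg ha h1.le)]

lemma key_ineq (a b : ℝ) (ha : 0 ≤ a) (hab : a ≤ b) :
    a * (1 - exp (-b)) ≤ b * (1 - exp (-a)) := by
  have := key_ineq' a (b - a) ha (by linarith)
  have hb : a + (b - a) = b := by ring
  rwa [hb] at this

lemma fim_integrand_integrable (n : MeasureTheory.Measure ℝ)
    (hn : IntegrableOn (fun u => min 1 u) (Ioi 0) n) (z : ℝ) (hz : 0 < z) :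
    IntegrableOn (fun u => 1 - Real.exp (-(z * u))) (Ioi 0) n := by
  have hmeas : AEStronglyMeasurable (fun u => 1 - Real.exp (-(z * u)))
      (n.restrict (Ioi 0)) := by
    have hcont : Continuous (fun u : ℝ => 1 - Real.exp (-(z * u))) :=
      continuous_const.sub (Real.continuous_exp.comp (continuous_const.mul continuous_id).neg)
    exact hcont.aestronglyMeasurable
  refine (hn.smul (max 1 z)).mono' hmeas ?_
  filter_upwards [ae_restrict_mem measurableSet_Ioi] with u hu
  simp only [Pi.smul_apply, smul_eq_mul, Real.norm_eq_abs]
  have hu' : (0:ℝ) < u := hu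
  have he : Real.exp (-(z*u)) ≤ 1 := by
    rw [Real.exp_le_one_iff]
    nlinarith
  have he2 : 0 < Real.exp (-(z*u)) := Real.exp_pos _
  have habs : |1 - Real.exp (-(z*u))| = 1 - Real.exp (-(z*u)) := abs_of_nonneg (by linarith)
  rw [habs]
  have hbound2 : 1 - Real.exp (-(z*u)) ≤ z * u := by
    have := Real.add_one_le_exp (-(z*u))
    linarith
  rcases le_total 1 u with h | h
  · rw [min_eq_left h]
    calc 1 - Real.exp (-(z*u)) ≤ 1 := by linarith
    _ ≤ max 1 z * 1 := by simp [le_max_left]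
  · rw [min_eq_right h]
    calc 1 - Real.exp (-(z*u)) ≤ z * u := hbound2
    _ ≤ max 1 z * u := by nlinarith [le_max_right 1 z]

theorem mean_oldest_families_antitone (b σ β : ℝ) (m n : Measure ℝ)
    (hb : 0 ≤ b) (hσ : 0 ≤ σ) (hβ : 0 ≤ β)
    (hm : IntegrableOn (fun u => min u (u ^ 2)) (Ioi 0) m)
    (hn : IntegrableOn (fun u => min 1 u) (Ioi 0) n)
    (hA1 : IntegrableOn (fun z => (psi b σ m z)⁻¹) (Ioi 1))
    (hA3 : condA3 σ m)
    (hFpos : ∀ z > (0 : ℝ), 0 < Fim β n z)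
    (c : ℝ → ℝ) (hc : IsExtinctionRate b σ m c) :
    AntitoneOn (fun t => c t / Fim β n (c t)) (Ioi 0) := by
  intro s hs t ht hst
  rcases eq_or_lt_of_le hst with rfl | hst
  · exact le_refl _
  obtain ⟨hcs, hIs⟩ := hc s hs
  obtain ⟨hct, hIt⟩ := hc t ht
  -- ψ⁻¹ is nonneg on nonneg reals
  have hψ : ∀ z : ℝ, 0 ≤ z → 0 ≤ (psi b σ m z)⁻¹ := by
    intro z hz
    apply inv_nonneg.mpr
    unfold psi
    have hint : 0 ≤ ∫ u in Ioi (0:ℝ), (Real.exp (-(z*u)) - 1 + z*u) ∂m := by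
      apply setIntegral_nonneg measurableSet_Ioi
      intro u _
      have := Real.add_one_le_exp (-(z*u))
      linarith
    have h1 : 0 ≤ b * z := mul_nonneg hb hz
    have h2 : 0 ≤ σ * z ^ 2 := mul_nonneg hσ (sq_nonneg z)
    linarith
  -- integrability on Ioi (c s)
  have hints : IntegrableOn (fun z => (psi b σ m z)⁻¹) (Ioi (c s)) := by
    by_contra h
    have h0 := integral_undef h
    rw [hIs] at h0
    exact absurd h0 (ne_of_gt hs)
  -- c is antitone
  have hcts : c t ≤ c s := by
    by_contra h
    push_neg at h
    have hle : t ≤ s := by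
      rw [← hIt, ← hIs]
      refine setIntegral_mono_set hints ?_ (HasSubset.Subset.eventuallyLE (Ioi_subset_Ioi h.le))
      filter_upwards [ae_restrict_mem measurableSet_Ioi] with z hz
      exact hψ z (le_of_lt (lt_trans hcs hz))
    exact absurd hle (not_le.mpr hst)
  set x := c t with hx
  set y := c s with hy
  have hxy : x ≤ y := hcts
  have hxpos : 0 < x := hct
  have hypos : 0 < y := hcs
  have hFx : 0 < Fim β n x := hFpos x hxpos
  have hFy : 0 < Fim β n y := hFpos y hypos
  -- key: x * Fim y ≤ y * Fim x
  have hImono : x * (∫ u in Ioi (0:ℝ), (1 - Real.exp (-(y * u))) ∂n)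
      ≤ y * (∫ u in Ioi (0:ℝ), (1 - Real.exp (-(x * u))) ∂n) := by
    rw [← integral_const_mul, ← integral_const_mul]
    refine setIntegral_mono_on
      ((fim_integrand_integrable n hn y hypos).const_mul x)
      ((fim_integrand_integrable n hn x hxpos).const_mul y)
      measurableSet_Ioi ?_
    intro u hu
    have hu' : (0:ℝ) < u := hu
    have h := key_ineq (x*u) (y*u) (by positivity) (by nlinarith)
    have h2 : u * (x * (1 - Real.exp (-(y*u)))) ≤ u * (y * (1 - Real.exp (-(x*u)))) := by
      nlinarith [h]
    exact le_of_mul_le_mul_left h2 hu'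
  have hkey : x * Fim β n y ≤ y * Fim β n x := by
    unfold Fim
    have hβxy : x * (β * y) = y * (β * x) := by ring
    nlinarith [hImono]
  simp only
  rw [div_le_div_iff₀ hFx hFy]
  exact hkey
end
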